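/- Exponential mechanism utility: For a finite outcome set O, database s, quality score q : S^n × O → ℝ with sensitivity Δq, the exponential mechanism that outputs o with probability proportional to exp(ε·q(s,o)/(2Δq)) satisfies: for every t > 0, with probability at least 1 - e^{-t}, q(s, M_E(s)) ≥ max_{o∈O} q(s,o) - (2Δq/ε)(log|O| + t). -/

import Mathlib

/-- Exponential mechanism utility: the mechanism that outputs `o` with probability
proportional to `exp(ε·q(o)/(2Δq))` over a finite outcome set satisfies, for every
`t > 0`, with probability at least `1 - e^{-t}`,
`q(M_E(s)) ≥ max_o q(o) - (2Δq/ε)(log|O| + t)`. -/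
theorem exponential_mechanism_utility {O : Type*} [Fintype O] [Nonempty O]
    (q : O → ℝ) (Δq ε : ℝ) (hΔ : 0 < Δq) (hε : 0 < ε)
    (M : PMF O)
    (hM : ∀ o, M o = ENNReal.ofReal
      (Real.exp (ε * q o / (2 * Δq)) / ∑ o' : O, Real.exp (ε * q o' / (2 * Δq)))) :
    ∀ t : ℝ, 0 < t →
      ENNReal.ofReal (1 - Real.exp (-t)) ≤
        M.toOuterMeasure
          {o | Finset.univ.sup' Finset.univ_nonempty q -
              (2 * Δq / ε) * (Real.log (Fintype.card O) + t) ≤ q o} := by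
  classical
  intro t ht
  set Z : ℝ := ∑ o' : O, Real.exp (ε * q o' / (2 * Δq)) with hZdef
  set OPT : ℝ := Finset.univ.sup' Finset.univ_nonempty q with hOPTdef
  set L : ℝ := Real.log (Fintype.card O) + t with hLdef
  set p : O → ℝ := fun o => Real.exp (ε * q o / (2 * Δq)) / Z with hpdef
  set G : Set O := {o | OPT - (2 * Δq / ε) * L ≤ q o} with hGdef
  have hZpos : 0 < Z := Finset.sum_pos (fun o _ => Real.exp_pos _) Finset.univ_nonempty
  obtain ⟨o₀, -, ho₀⟩ := Finset.exists_mem_eq_sup' Finset.univ_nonempty q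
  have hZge : Real.exp (ε * OPT / (2 * Δq)) ≤ Z := by
    rw [hZdef, hOPTdef, ho₀]
    exact Finset.single_le_sum (f := fun o => Real.exp (ε * q o / (2 * Δq))) (fun o _ => (Real.exp_pos _).le) (Finset.mem_univ o₀)
  have hn : (0:ℝ) < Fintype.card O := by
    exact_mod_cast Fintype.card_pos
  -- per-element bound on the bad set
  have key : ∀ o : O, o ∉ G → p o ≤ Real.exp (-t) / Fintype.card O := by
    intro o ho
    have hq : q o < OPT - (2 * Δq / ε) * L := lt_of_not_ge ho
    have h1 : ε * q o / (2 * Δq) ≤ ε * OPT / (2 * Δq) - L := by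
      have harith : ε * (OPT - (2 * Δq / ε) * L) / (2 * Δq) = ε * OPT / (2 * Δq) - L := by
        field_simp
      have := div_le_div_of_nonneg_right (mul_le_mul_of_nonneg_left hq.le hε.le)
        (by positivity : (0:ℝ) ≤ 2 * Δq)
      calc ε * q o / (2 * Δq) ≤ ε * (OPT - (2 * Δq / ε) * L) / (2 * Δq) := this
        _ = ε * OPT / (2 * Δq) - L := harith
    have h2 : Real.exp (ε * q o / (2 * Δq)) ≤ Real.exp (ε * OPT / (2 * Δq)) * Real.exp (-L) := by
      rw [← Real.exp_add]
      exact Real.exp_le_exp.mpr (by linarith)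
    have h3 : p o ≤ Real.exp (-L) := by
      rw [hpdef]
      calc Real.exp (ε * q o / (2 * Δq)) / Z
          ≤ Real.exp (ε * OPT / (2 * Δq)) * Real.exp (-L) / Z :=
            div_le_div_of_nonneg_right h2 hZpos.le
        _ = (Real.exp (ε * OPT / (2 * Δq)) / Z) * Real.exp (-L) := by ring
        _ ≤ 1 * Real.exp (-L) := by
            apply mul_le_mul_of_nonneg_right _ (Real.exp_pos _).le
            exact (div_le_one hZpos).mpr hZge
        _ = Real.exp (-L) := one_mul _
    have h4 : Real.exp (-L) = Real.exp (-t) / Fintype.card O := by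
      rw [hLdef, neg_add, Real.exp_add, Real.exp_neg, Real.exp_log hn]
      ring
    linarith [h3, h4.le]
  -- sum over bad set
  have hsum_bad : ∑ o ∈ Finset.univ.filter (fun o => o ∉ G), p o ≤ Real.exp (-t) := by
    calc ∑ o ∈ Finset.univ.filter (fun o => o ∉ G), p o
        ≤ ∑ _o ∈ Finset.univ.filter (fun o => o ∉ G), Real.exp (-t) / Fintype.card O :=
          Finset.sum_le_sum (fun o ho => key o (Finset.mem_filter.mp ho).2)
      _ = (Finset.univ.filter (fun o => o ∉ G)).card * (Real.exp (-t) / Fintype.card O) := by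
          rw [Finset.sum_const, nsmul_eq_mul]
      _ ≤ Fintype.card O * (Real.exp (-t) / Fintype.card O) := by
          apply mul_le_mul_of_nonneg_right _ (by positivity)
          exact_mod_cast Finset.card_filter_le _ _
      _ = Real.exp (-t) := by field_simp
  have hsum_one : ∑ o : O, p o = 1 := by
    rw [hpdef]
    simp only
    rw [← Finset.sum_div, ← hZdef, div_self hZpos.ne']
  have hsum_good : 1 - Real.exp (-t) ≤ ∑ o ∈ Finset.univ.filter (fun o => o ∈ G), p o := by
    have hsplit := Finset.sum_filter_add_sum_filter_not Finset.univ (fun o => o ∈ G) p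
    rw [hsum_one] at hsplit
    linarith
  -- compute the measure
  have hmeas : M.toOuterMeasure G = ENNReal.ofReal (∑ o ∈ Finset.univ.filter (fun o => o ∈ G), p o) := by
    rw [PMF.toOuterMeasure_apply, tsum_fintype,
      ENNReal.ofReal_sum_of_nonneg (fun o _ => by positivity), Finset.sum_filter]
    refine Finset.sum_congr rfl fun o _ => ?_
    by_cases h : o ∈ G <;> simp [Set.indicator_apply, h, hM o, hpdef]
  calc ENNReal.ofReal (1 - Real.exp (-t))
      ≤ ENNReal.ofReal (∑ o ∈ Finset.univ.filter (fun o => o ∈ G), p o) :=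
        ENNReal.ofReal_le_ofReal hsum_good
    _ = M.toOuterMeasure G := hmeas.symm
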